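/- Let k = F_q with q even (characteristic 2), and fix δ ∈ F_q not of the form x² + x. For partitions data (μ, ν) ∈ Δ = {(μ,ν) : |μ|+|ν| = n, ν_i ≤ μ_i + 1}, associate to each (μ,ν) with k = #{i : μ_{i+1}+1 ≤ ν_i < μ_i+1} the 2^k pairs of partitions obtained by swapping blocks (μ^{1,i},ν^{1,i}) ↔ (ν^{1,i}−1, μ^{1,i}+1) as in the construction. Then the resulting set of pairs of partitions, over all (μ,ν) ∈ Δ, is exactly {(μ,ν) : |μ|+|ν| = n}, and in particular has cardinality p₂(n). -/

import Mathlib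

/-- A partition encoded as a weakly decreasing function `ℕ → ℕ` with finitely many
nonzero parts (zero-padded). -/
def IsPartitionFun (f : ℕ → ℕ) : Prop :=
  Antitone f ∧ ∃ N, ∀ i, N ≤ i → f i = 0

/-- Pairs of partitions of total size `n`. -/
def PartitionPairs (n : ℕ) : Set ((ℕ → ℕ) × (ℕ → ℕ)) :=
  {p | IsPartitionFun p.1 ∧ IsPartitionFun p.2 ∧
    (∑ᶠ i, p.1 i) + (∑ᶠ i, p.2 i) = n}

/-- `Δ`: pairs of partitions `(μ,ν)` of total size `n` with `νᵢ ≤ μᵢ + 1` (0-based: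
`p.1 i = μ_{i+1}`, `p.2 i = ν_{i+1}`). -/
def DeltaSet (n : ℕ) : Set ((ℕ → ℕ) × (ℕ → ℕ)) :=
  {p ∈ PartitionPairs n | ∀ i, p.2 i ≤ p.1 i + 1}

/-- The set of indices `i` with `μ_{i+1} + 1 ≤ νᵢ < μᵢ + 1` (0-based). -/
def SwapIndices (μ ν : ℕ → ℕ) : Set ℕ :=
  {i | μ (i + 1) + 1 ≤ ν i ∧ ν i < μ i + 1}

open scoped Classical

/-- Block-swap construction: given a choice `ε` of swap/keep for each swap index
`r ∈ SwapIndices μ ν` (blocks being the maximal segments `(r_{i-1}, r_i]`), index `j`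
belongs to the block of the least swap index `≥ j`; on swapped blocks `(μⱼ,νⱼ)` is
replaced by `(νⱼ − 1, μⱼ + 1)`, and indices beyond the last swap index are kept. -/
noncomputable def blockSwap (μ ν : ℕ → ℕ) (ε : {i // i ∈ SwapIndices μ ν} → Bool) :
    (ℕ → ℕ) × (ℕ → ℕ) :=
  (fun j =>
    if h : (SwapIndices μ ν ∩ Set.Ici j).Nonempty then
      (if ε ⟨sInf (SwapIndices μ ν ∩ Set.Ici j), (Nat.sInf_mem h).1⟩ then ν j - 1 else μ j)
    else μ j,
   fun j =>
    if h : (SwapIndices μ ν ∩ Set.Ici j).Nonempty then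
      (if ε ⟨sInf (SwapIndices μ ν ∩ Set.Ici j), (Nat.sInf_mem h).1⟩ then μ j + 1 else ν j)
    else ν j)

namespace BSAux

/-- Pointwise inverse: first component. -/
noncomputable def invμ (f g : ℕ → ℕ) (i : ℕ) : ℕ := if f i + 2 ≤ g i then g i - 1 else f i
/-- Pointwise inverse: second component. -/
noncomputable def invν (f g : ℕ → ℕ) (i : ℕ) : ℕ := if f i + 2 ≤ g i then f i + 1 else g i

variable {μ ν : ℕ → ℕ}

lemma sInf_eq_self {j : ℕ} (hj : j ∈ SwapIndices μ ν) :
    sInf (SwapIndices μ ν ∩ Set.Ici j) = j := by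
  have hne : (SwapIndices μ ν ∩ Set.Ici j).Nonempty := ⟨j, hj, le_refl j⟩
  exact le_antisymm (Nat.sInf_le ⟨hj, le_refl j⟩) (Nat.sInf_mem hne).2

lemma inter_succ {j : ℕ} (hj : j ∉ SwapIndices μ ν) :
    SwapIndices μ ν ∩ Set.Ici j = SwapIndices μ ν ∩ Set.Ici (j + 1) := by
  ext r
  simp only [Set.mem_inter_iff, Set.mem_Ici]
  constructor
  · rintro ⟨h1, h2⟩
    refine ⟨h1, ?_⟩
    rcases eq_or_lt_of_le h2 with h | h
    · exact absurd (h ▸ h1) hj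
    · exact h
  · rintro ⟨h1, h2⟩; exact ⟨h1, by omega⟩

lemma nu_pos (hν : Antitone ν) {j r : ℕ} (hr : r ∈ SwapIndices μ ν) (hjr : j ≤ r) :
    1 ≤ ν j := le_trans (le_trans (by omega) hr.1) (hν hjr)

section Forward
variable (hμ : Antitone μ) (hν : Antitone ν) (hΔ : ∀ i, ν i ≤ μ i + 1)
  (ε : {i // i ∈ SwapIndices μ ν} → Bool)
include hν hΔ

/-- forward determination of the pair -/
lemma fwd_inv (j : ℕ) :
    invμ (blockSwap μ ν ε).1 (blockSwap μ ν ε).2 j = μ j ∧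
    invν (blockSwap μ ν ε).1 (blockSwap μ ν ε).2 j = ν j := by
  have hΔj := hΔ j
  simp only [blockSwap, invμ, invν]
  by_cases h : (SwapIndices μ ν ∩ Set.Ici j).Nonempty
  · simp only [dif_pos h]
    set r := sInf (SwapIndices μ ν ∩ Set.Ici j) with hr
    have hrmem := Nat.sInf_mem h
    have hν1 : 1 ≤ ν j := nu_pos hν hrmem.1 hrmem.2
    by_cases hε : ε ⟨r, hrmem.1⟩
    · simp only [hr] at hε
      simp only [hε, if_true]
      constructor <;> [skip; skip] <;> split_ifs <;> omega
    · simp only [hr] at hε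
      simp only [hε, if_false]
      constructor <;> split_ifs <;> omega
  · simp only [dif_neg h]
    constructor <;> split_ifs <;> omega

/-- forward determination of ε -/
lemma fwd_eps {r : ℕ} (hr : r ∈ SwapIndices μ ν) :
    ε ⟨r, hr⟩ = decide ((blockSwap μ ν ε).1 r + 2 ≤ (blockSwap μ ν ε).2 r) := by
  have h : (SwapIndices μ ν ∩ Set.Ici r).Nonempty := ⟨r, hr, le_refl r⟩
  have hs : sInf (SwapIndices μ ν ∩ Set.Ici r) = r := sInf_eq_self hr
  have hν1 : 1 ≤ ν r := nu_pos hν hr (le_refl r)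
  have h1 := hr.1
  have h2 := hr.2
  simp only [blockSwap, dif_pos h]
  have : (⟨sInf (SwapIndices μ ν ∩ Set.Ici r), (Nat.sInf_mem h).1⟩ :
      {i // i ∈ SwapIndices μ ν}) = ⟨r, hr⟩ := Subtype.ext hs
  rw [this]
  by_cases hε : ε ⟨r, hr⟩
  · rw [hε, if_pos rfl, if_pos rfl]; symm; simp; omega
  · simp only [Bool.not_eq_true] at hε
    rw [hε]; simp only [Bool.false_eq_true, if_false]; symm; simp; omega

end Forward

section Forward2
variable (hμ : Antitone μ) (hν : Antitone ν) (hΔ : ∀ i, ν i ≤ μ i + 1)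
  (ε : {i // i ∈ SwapIndices μ ν} → Bool)

include hμ hν hΔ in
lemma fwd_antitone :
    Antitone (blockSwap μ ν ε).1 ∧ Antitone (blockSwap μ ν ε).2 := by
  constructor <;>
  · apply antitone_nat_of_succ_le
    intro j
    have hμj : μ (j+1) ≤ μ j := hμ (Nat.le_succ j)
    have hνj : ν (j+1) ≤ ν j := hν (Nat.le_succ j)
    have hΔj := hΔ j
    have hΔj1 := hΔ (j+1)
    simp only [blockSwap]
    by_cases h1 : (SwapIndices μ ν ∩ Set.Ici (j+1)).Nonempty
    · have h0 : (SwapIndices μ ν ∩ Set.Ici j).Nonempty := by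
        obtain ⟨r, hr⟩ := h1
        exact ⟨r, hr.1, le_trans (Nat.le_succ j) hr.2⟩
      rw [dif_pos h0, dif_pos h1]
      by_cases hjS : j ∈ SwapIndices μ ν
      · have hrj : sInf (SwapIndices μ ν ∩ Set.Ici j) = j := sInf_eq_self hjS
        have hr1 := Nat.sInf_mem h1
        have hν1 : 1 ≤ ν (j+1) := nu_pos hν hr1.1 hr1.2
        have hS1 := hjS.1
        have hS2 := hjS.2
        split_ifs <;> omega
      · have heq : sInf (SwapIndices μ ν ∩ Set.Ici j) = sInf (SwapIndices μ ν ∩ Set.Ici (j+1)) := by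
          rw [inter_succ hjS]
        have hr1 := Nat.sInf_mem h1
        have hν1 : 1 ≤ ν (j+1) := nu_pos hν hr1.1 hr1.2
        have hεeq : ε ⟨sInf (SwapIndices μ ν ∩ Set.Ici j), (Nat.sInf_mem h0).1⟩
            = ε ⟨sInf (SwapIndices μ ν ∩ Set.Ici (j+1)), (Nat.sInf_mem h1).1⟩ := by
          congr 1
          exact Subtype.ext heq
        rw [hεeq]
        split_ifs <;> omega
    · by_cases h0 : (SwapIndices μ ν ∩ Set.Ici j).Nonempty
      · have hjS : j ∈ SwapIndices μ ν := by
          by_contra hjS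
          rw [inter_succ hjS] at h0
          exact h1 h0
        have hS1 := hjS.1
        have hS2 := hjS.2
        have hν1 : 1 ≤ ν j := nu_pos hν hjS (le_refl j)
        rw [dif_pos h0, dif_neg h1]
        split_ifs <;> omega
      · rw [dif_neg h0, dif_neg h1]
        omega

include hμ hν hΔ in
lemma fwd_mem {n : ℕ} (hsum : (∑ᶠ i, μ i) + (∑ᶠ i, ν i) = n)
    {N : ℕ} (hN : ∀ i, N ≤ i → μ i = 0 ∧ ν i = 0) :
    blockSwap μ ν ε ∈ PartitionPairs n := by
  have hempty : ∀ i, N ≤ i → ¬ (SwapIndices μ ν ∩ Set.Ici i).Nonempty := by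
    rintro i hi ⟨r, hr1, hr2⟩
    have : ν r = 0 := (hN r (le_trans hi hr2)).2
    have := hr1.1
    omega
  have hzero : ∀ i, N ≤ i → (blockSwap μ ν ε).1 i = 0 ∧ (blockSwap μ ν ε).2 i = 0 := by
    intro i hi
    simp only [blockSwap, dif_neg (hempty i hi)]
    exact hN i hi
  have hpt : ∀ j, (blockSwap μ ν ε).1 j + (blockSwap μ ν ε).2 j = μ j + ν j := by
    intro j
    simp only [blockSwap]
    by_cases h : (SwapIndices μ ν ∩ Set.Ici j).Nonempty
    · rw [dif_pos h, dif_pos h]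
      have hr := Nat.sInf_mem h
      have hν1 : 1 ≤ ν j := nu_pos hν hr.1 hr.2
      split_ifs <;> omega
    · rw [dif_neg h, dif_neg h]
  refine ⟨⟨(fwd_antitone hμ hν hΔ ε).1, N, fun i hi => (hzero i hi).1⟩,
    ⟨(fwd_antitone hμ hν hΔ ε).2, N, fun i hi => (hzero i hi).2⟩, ?_⟩
  have hsub : ∀ f : ℕ → ℕ, (∀ i, N ≤ i → f i = 0) →
      ∑ᶠ i, f i = ∑ i ∈ Finset.range N, f i := by
    intro f hf
    apply finsum_eq_finset_sum_of_support_subset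
    intro x hx
    simp only [Finset.coe_range, Set.mem_Iio]
    by_contra hc
    exact hx (hf x (by omega))
  rw [hsub _ (fun i hi => (hzero i hi).1), hsub _ (fun i hi => (hzero i hi).2)]
  rw [hsub μ (fun i hi => (hN i hi).1), hsub ν (fun i hi => (hN i hi).2)] at hsum
  rw [← Finset.sum_add_distrib] at hsum ⊢
  rw [← hsum]
  exact Finset.sum_congr rfl (fun j _ => hpt j)

end Forward2

section Backward
variable {f g : ℕ → ℕ} (hf : Antitone f) (hg : Antitone g)

lemma inv_delta (i : ℕ) : invν f g i ≤ invμ f g i + 1 := by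
  simp only [invμ, invν]; split_ifs <;> omega

include hf hg in
lemma inv_antitone : Antitone (invμ f g) ∧ Antitone (invν f g) := by
  constructor <;>
  · apply antitone_nat_of_succ_le
    intro j
    have h1 : f (j+1) ≤ f j := hf (Nat.le_succ j)
    have h2 : g (j+1) ≤ g j := hg (Nat.le_succ j)
    simp only [invμ, invν]
    split_ifs <;> omega

lemma inv_sum (i : ℕ) : invμ f g i + invν f g i = f i + g i := by
  simp only [invμ, invν]; split_ifs <;> omega

include hf in
lemma memS_of_A_notA {i : ℕ} (hA : f i + 2 ≤ g i) (hA1 : ¬ (f (i+1) + 2 ≤ g (i+1))) :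
    i ∈ SwapIndices (invμ f g) (invν f g) := by
  have h1 : f (i+1) ≤ f i := hf (Nat.le_succ i)
  simp only [SwapIndices, Set.mem_setOf_eq, invμ, invν, if_pos hA, if_neg hA1]
  omega

include hg in
lemma step_keep {i : ℕ} (hgi : g i ≤ f i)
    (hS : i ∉ SwapIndices (invμ f g) (invν f g)) : g (i+1) ≤ f (i+1) := by
  have h2 : g (i+1) ≤ g i := hg (Nat.le_succ i)
  have hAi : ¬ (f i + 2 ≤ g i) := by omega
  simp only [SwapIndices, Set.mem_setOf_eq, invμ, invν, if_neg hAi] at hS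
  by_cases hA1 : f (i+1) + 2 ≤ g (i+1)
  · rw [if_pos hA1] at hS; omega
  · rw [if_neg hA1] at hS; omega

include hf in
lemma chainA {j r : ℕ} (hjr : j ≤ r)
    (hmin : ∀ t, j ≤ t → t < r → t ∉ SwapIndices (invμ f g) (invν f g))
    (hAj : f j + 2 ≤ g j) : f r + 2 ≤ g r := by
  induction r, hjr using Nat.le_induction with
  | base => exact hAj
  | succ r hjr ih =>
    have hAr : f r + 2 ≤ g r := ih (fun t ht ht' => hmin t ht (by omega))
    by_contra hc
    exact hmin r hjr (by omega) (memS_of_A_notA hf hAr hc)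

include hg in
lemma chainK {j r : ℕ} (hjr : j ≤ r)
    (hmin : ∀ t, j ≤ t → t < r → t ∉ SwapIndices (invμ f g) (invν f g))
    (hKj : g j ≤ f j) : g r ≤ f r := by
  induction r, hjr using Nat.le_induction with
  | base => exact hKj
  | succ r hjr ih =>
    exact step_keep hg (ih (fun t ht ht' => hmin t ht (by omega))) (hmin r hjr (by omega))

include hf in
lemma notA_of_empty {j : ℕ} (hN : ∃ N, ∀ i, N ≤ i → g i = 0)
    (h : ¬ (SwapIndices (invμ f g) (invν f g) ∩ Set.Ici j).Nonempty) :
    ¬ (f j + 2 ≤ g j) := by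
  intro hA
  obtain ⟨N, hNg⟩ := hN
  have hmin : ∀ t, j ≤ t → t < max (N) (j) + 1 → t ∉ SwapIndices (invμ f g) (invν f g) := by
    intro t ht _ hts
    exact h ⟨t, hts, ht⟩
  have h1 := chainA hf (show j ≤ max N j + 1 by omega) hmin hA
  have h2 := hNg (max N j + 1) (by omega)
  omega

include hf hg in
lemma blockSwap_inv (hN : ∃ N, ∀ i, N ≤ i → g i = 0) :
    blockSwap (invμ f g) (invν f g)
      (fun r => decide (f r.1 + 2 ≤ g r.1)) = (f, g) := by
  have key : ∀ j,
      (blockSwap (invμ f g) (invν f g) (fun r => decide (f r.1 + 2 ≤ g r.1))).1 j = f j ∧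
      (blockSwap (invμ f g) (invν f g) (fun r => decide (f r.1 + 2 ≤ g r.1))).2 j = g j := by
    intro j
    simp only [blockSwap]
    by_cases h : (SwapIndices (invμ f g) (invν f g) ∩ Set.Ici j).Nonempty
    · rw [dif_pos h, dif_pos h]
      simp only [decide_eq_true_eq]
      set r := sInf (SwapIndices (invμ f g) (invν f g) ∩ Set.Ici j) with hrdef
      have hrmem := Nat.sInf_mem h
      have hjr : j ≤ r := hrmem.2
      have hmin : ∀ t, j ≤ t → t < r → t ∉ SwapIndices (invμ f g) (invν f g) := by
        intro t ht htr hts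
        have : r ≤ t := Nat.sInf_le ⟨hts, ht⟩
        omega
      by_cases hAr : f r + 2 ≤ g r
      · rw [if_pos hAr, if_pos hAr]
        by_cases hAj : f j + 2 ≤ g j
        · simp only [invμ, invν, if_pos hAj]
          omega
        · have hgj : g j = f j + 1 := by
            by_contra hc
            have hKj : g j ≤ f j := by
              omega
            have := chainK hg hjr hmin hKj
            omega
          simp only [invμ, invν, if_neg hAj]
          omega
      · rw [if_neg hAr, if_neg hAr]
        have hAj : ¬ (f j + 2 ≤ g j) := by
          intro hAj
          exact hAr (chainA hf hjr hmin hAj)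
        simp [invμ, invν, if_neg hAj]
    · rw [dif_neg h, dif_neg h]
      have hAj := notA_of_empty hf hN h
      simp [invμ, invν, if_neg hAj]
  exact Prod.ext (funext fun j => (key j).1) (funext fun j => (key j).2)

include hf hg in
lemma inv_mem {n : ℕ} {Nf Ng : ℕ} (hNf : ∀ i, Nf ≤ i → f i = 0) (hNg : ∀ i, Ng ≤ i → g i = 0)
    (hsum : (∑ᶠ i, f i) + (∑ᶠ i, g i) = n) :
    (invμ f g, invν f g) ∈ DeltaSet n := by
  set N := max Nf Ng with hNdef
  have hzero : ∀ i, N ≤ i → invμ f g i = 0 ∧ invν f g i = 0 := by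
    intro i hi
    have h1 : f i = 0 := hNf i (le_trans (le_max_left _ _) hi)
    have h2 : g i = 0 := hNg i (le_trans (le_max_right _ _) hi)
    simp only [invμ, invν]
    split_ifs <;> omega
  have hsub : ∀ h : ℕ → ℕ, (∀ i, N ≤ i → h i = 0) →
      ∑ᶠ i, h i = ∑ i ∈ Finset.range N, h i := by
    intro h hh
    apply finsum_eq_finset_sum_of_support_subset
    intro x hx
    simp only [Finset.coe_range, Set.mem_Iio]
    by_contra hc
    exact hx (hh x (by omega))
  refine ⟨⟨⟨(inv_antitone hf hg).1, N, fun i hi => (hzero i hi).1⟩,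
    ⟨(inv_antitone hf hg).2, N, fun i hi => (hzero i hi).2⟩, ?_⟩, fun i => inv_delta i⟩
  rw [hsub _ (fun i hi => (hzero i hi).1), hsub _ (fun i hi => (hzero i hi).2)]
  rw [hsub f (fun i hi => hNf i (le_trans (le_max_left _ _) hi)),
      hsub g (fun i hi => hNg i (le_trans (le_max_right _ _) hi))] at hsum
  rw [← Finset.sum_add_distrib] at hsum ⊢
  rw [← hsum]
  exact Finset.sum_congr rfl (fun j _ => inv_sum j)

end Backward

end BSAux


namespace BSCount

def PFun (m : ℕ) : Set (ℕ → ℕ) := {f | IsPartitionFun f ∧ ∑ᶠ i, f i = m}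

noncomputable def n0 (f : ℕ → ℕ) : ℕ := sInf {i | f i = 0}

lemma n0_spec {f : ℕ → ℕ} (hf : IsPartitionFun f) : ∀ i, f i = 0 ↔ n0 f ≤ i := by
  obtain ⟨hanti, N, hN⟩ := hf
  have hne : {i | f i = 0}.Nonempty := ⟨N, hN N le_rfl⟩
  intro i
  constructor
  · intro hi
    by_contra hc
    have hlt : i < n0 f := by omega
    exact absurd hi (Nat.notMem_of_lt_sInf (s := {j | f j = 0}) hlt)
  · intro hi
    have h0 : f (n0 f) = 0 := Nat.sInf_mem hne
    have := hanti hi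
    omega

lemma sum_list_range (f : ℕ → ℕ) (N : ℕ) :
    ((List.range N).map f).sum = ∑ i ∈ Finset.range N, f i := by
  induction N with
  | zero => simp
  | succ n ih =>
    rw [Finset.sum_range_succ, List.range_succ, List.map_append, List.sum_append, ih]
    simp

lemma sum_eq_range {f : ℕ → ℕ} {N : ℕ} (hN : ∀ i, N ≤ i → f i = 0) :
    ∑ᶠ i, f i = ∑ i ∈ Finset.range N, f i := by
  apply finsum_eq_finset_sum_of_support_subset
  intro x hx
  simp only [Finset.coe_range, Set.mem_Iio]
  by_contra hc
  exact hx (hN x (by omega))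

lemma sorted_map_range {f : ℕ → ℕ} (hf : Antitone f) (N : ℕ) :
    List.Pairwise (· ≥ ·) ((List.range N).map f) := by
  rw [List.pairwise_map]
  exact List.pairwise_lt_range.imp (fun h => hf (le_of_lt h))

noncomputable def toPart {m : ℕ} (F : ↥(PFun m)) : Nat.Partition m where
  parts := ↑((List.range (n0 F.1)).map F.1)
  parts_pos := by
    intro a ha
    simp only [Multiset.mem_coe, List.mem_map, List.mem_range] at ha
    obtain ⟨i, hi, rfl⟩ := ha
    rcases Nat.eq_zero_or_pos (F.1 i) with h0 | h0
    · have := (n0_spec F.2.1 i).mp h0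
      omega
    · exact h0
  parts_sum := by
    have h1 : ∀ i, n0 F.1 ≤ i → F.1 i = 0 := fun i hi => (n0_spec F.2.1 i).mpr hi
    have := F.2.2
    rw [sum_eq_range h1] at this
    rw [Multiset.sum_coe, sum_list_range]
    exact this

noncomputable def ofPartFun {m : ℕ} (p : Nat.Partition m) : ℕ → ℕ :=
  fun i => (p.parts.sort (· ≥ ·)).getD i 0

lemma ofPartFun_antitone {m : ℕ} (p : Nat.Partition m) : Antitone (ofPartFun p) := by
  intro i j hij
  unfold ofPartFun
  set l := p.parts.sort (· ≥ ·) with hl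
  by_cases hj : j < l.length
  · have hi : i < l.length := lt_of_le_of_lt hij hj
    rw [List.getD_eq_getElem l 0 hj, List.getD_eq_getElem l 0 hi]
    rcases eq_or_lt_of_le hij with rfl | hlt
    · exact le_refl _
    · exact List.Pairwise.rel_get_of_lt (Multiset.pairwise_sort _ _)
        (show (⟨i, hi⟩ : Fin l.length) < ⟨j, hj⟩ from hlt)
  · rw [List.getD_eq_default l 0 (by omega)]
    exact Nat.zero_le _

lemma ofPartFun_zero {m : ℕ} (p : Nat.Partition m) {i : ℕ}
    (hi : (p.parts.sort (· ≥ ·)).length ≤ i) : ofPartFun p i = 0 :=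
  List.getD_eq_default _ 0 hi

lemma map_range_getD (l : List ℕ) : (List.range l.length).map (fun i => l.getD i 0) = l := by
  apply List.ext_getElem
  · simp
  · intro i h1 h2
    simp [List.getD_eq_getElem l 0 h2, List.getElem?_eq_getElem h2]

noncomputable def ofPart {m : ℕ} (p : Nat.Partition m) : ↥(PFun m) := by
  refine ⟨ofPartFun p, ⟨ofPartFun_antitone p, ⟨_, fun i hi => ofPartFun_zero p hi⟩⟩, ?_⟩
  rw [sum_eq_range (N := (p.parts.sort (· ≥ ·)).length) (fun i hi => ofPartFun_zero p hi)]
  have := map_range_getD (p.parts.sort (· ≥ ·))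
  calc ∑ i ∈ Finset.range (p.parts.sort (· ≥ ·)).length, ofPartFun p i
      = ((List.range (p.parts.sort (· ≥ ·)).length).map (ofPartFun p)).sum :=
        (sum_list_range _ _).symm
    _ = (p.parts.sort (· ≥ ·)).sum := by
        rw [show (List.range (p.parts.sort (· ≥ ·)).length).map (ofPartFun p)
          = p.parts.sort (· ≥ ·) from this]
    _ = m := by rw [← Multiset.sum_coe, Multiset.sort_eq]; exact p.parts_sum

noncomputable def pfunEquiv (m : ℕ) : ↥(PFun m) ≃ Nat.Partition m where
  toFun := toPart
  invFun := ofPart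
  left_inv := by
    rintro ⟨f, hf, hsum⟩
    apply Subtype.ext
    funext i
    show ofPartFun (toPart ⟨f, hf, hsum⟩) i = f i
    unfold ofPartFun toPart
    simp only
    have hsorted : ((List.range (n0 f)).map f).Pairwise (· ≥ ·) := sorted_map_range hf.1 _
    have hperm : (Multiset.sort ↑((List.range (n0 f)).map f) (· ≥ ·)).Perm
        ((List.range (n0 f)).map f) := by
      rw [← Multiset.coe_eq_coe, Multiset.sort_eq]
    rw [List.Perm.eq_of_pairwise' (Multiset.pairwise_sort _ _) hsorted hperm]
    by_cases hi : i < n0 f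
    · rw [List.getD_eq_getElem _ 0 (by simpa using hi)]
      simp
    · rw [List.getD_eq_default _ 0 (by simpa using hi)]
      exact ((n0_spec hf i).mpr (by omega)).symm
  right_inv := by
    intro p
    apply Nat.Partition.ext
    show ↑((List.range (n0 (ofPartFun p))).map (ofPartFun p)) = p.parts
    set l := p.parts.sort (· ≥ ·) with hl
    have hlen : n0 (ofPartFun p) = l.length := by
      have hpf : IsPartitionFun (ofPartFun p) :=
        ⟨ofPartFun_antitone p, ⟨_, fun i hi => ofPartFun_zero p hi⟩⟩
      have h1 : ofPartFun p l.length = 0 := ofPartFun_zero p le_rfl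
      have h2 := (n0_spec hpf l.length).mp h1
      rcases eq_or_lt_of_le h2 with h | h
      · exact h
      · exfalso
        have h3 : ofPartFun p (n0 (ofPartFun p)) = 0 := (n0_spec hpf _).mpr le_rfl
        have h4 : 0 < ofPartFun p (n0 (ofPartFun p)) := by
          show 0 < l.getD (n0 (ofPartFun p)) 0
          rw [List.getD_eq_getElem l 0 h]
          apply p.parts_pos
          rw [← Multiset.sort_eq p.parts (· ≥ ·), ← hl]
          exact List.getElem_mem _
        omega
    rw [hlen]
    have : (List.range l.length).map (ofPartFun p) = l := by
      have := map_range_getD l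
      unfold ofPartFun
      rw [← hl]
      exact this
    rw [this, hl, Multiset.sort_eq]

lemma card_PFun (m : ℕ) : Nat.card ↥(PFun m) = Fintype.card (Nat.Partition m) := by
  rw [Nat.card_congr (pfunEquiv m), Nat.card_eq_fintype_card]

def numPartitionPairs (n : ℕ) : ℕ :=
  ∑ k ∈ Finset.range (n + 1), Fintype.card (Nat.Partition k) * Fintype.card (Nat.Partition (n - k))

noncomputable def pairSplit (n : ℕ) :
    (Σ k : Fin (n + 1), ↥(PFun k) × ↥(PFun (n - k))) → ↥(PartitionPairs n) :=
  fun x => ⟨(x.2.1.1, x.2.2.1), x.2.1.2.1, x.2.2.2.1, by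
    have h1 := x.2.1.2.2
    have h2 := x.2.2.2.2
    have h3 := x.1.isLt
    dsimp only
    omega⟩

lemma pairSplit_bijective (n : ℕ) : Function.Bijective (pairSplit n) := by
  constructor
  · rintro ⟨k, F, G⟩ ⟨k', F', G'⟩ h
    simp only [pairSplit, Subtype.mk.injEq, Prod.mk.injEq] at h
    replace h := Prod.ext_iff.mp (congrArg Subtype.val h)
    have hF : F.1 = F'.1 := h.1
    have hG : G.1 = G'.1 := h.2
    have hk : k = k' := by
      apply Fin.ext
      have e1 : (k : ℕ) = ∑ᶠ i, F.1 i := F.2.2.symm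
      have e2 : (k' : ℕ) = ∑ᶠ i, F'.1 i := F'.2.2.symm
      rw [e1, e2, hF]
    subst hk
    have hFG : (F, G) = (F', G') := by
      rw [Prod.ext_iff]
      exact ⟨Subtype.ext hF, Subtype.ext hG⟩
    rw [hFG]
  · rintro ⟨⟨f, g⟩, hf, hg, hsum⟩
    dsimp only at hsum hf hg
    have hk : (∑ᶠ i, f i) < n + 1 := by omega
    refine ⟨⟨⟨∑ᶠ i, f i, hk⟩, ⟨f, hf, rfl⟩, ⟨g, hg, ?_⟩⟩, ?_⟩
    · simp only
      omega
    · apply Subtype.ext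
      rfl

lemma card_partitionPairs (n : ℕ) : Nat.card ↥(PartitionPairs n) = numPartitionPairs n := by
  rw [← Nat.card_eq_of_bijective _ (pairSplit_bijective n)]
  rw [Nat.card_congr (Equiv.sigmaCongrRight
    (fun k : Fin (n+1) => (pfunEquiv (k : ℕ)).prodCongr (pfunEquiv (n - (k : ℕ)))))]
  rw [Nat.card_eq_fintype_card, Fintype.card_sigma]
  rw [numPartitionPairs, ← Fin.sum_univ_eq_sum_range
    (fun k => Fintype.card (Nat.Partition k) * Fintype.card (Nat.Partition (n - k))) (n+1)]
  exact Finset.sum_congr rfl (fun k _ => Fintype.card_prod _ _)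

end BSCount

/-- `p₂ m` = number of pairs of partitions of total size `m`, as a convolution of the
partition counting function. -/
def numPartitionPairs (n : ℕ) : ℕ :=
  ∑ k ∈ Finset.range (n + 1), Fintype.card (Nat.Partition k) * Fintype.card (Nat.Partition (n - k))

/-- over all `(μ,ν) ∈ Δ`, the `2^k` pairs of partitions produced by the
block-swap construction are distinct and exhaust all pairs of partitions of total size
`n`; in particular there are `p₂(n)` of them. -/
theorem blockSwap_bijection (n : ℕ) :
    Function.Injective
      (fun pe : Σ p : ↥(DeltaSet n), ({i // i ∈ SwapIndices (p : (ℕ → ℕ) × (ℕ → ℕ)).1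
          (p : (ℕ → ℕ) × (ℕ → ℕ)).2} → Bool) =>
        blockSwap (pe.1 : (ℕ → ℕ) × (ℕ → ℕ)).1 (pe.1 : (ℕ → ℕ) × (ℕ → ℕ)).2 pe.2) ∧
    Set.range
      (fun pe : Σ p : ↥(DeltaSet n), ({i // i ∈ SwapIndices (p : (ℕ → ℕ) × (ℕ → ℕ)).1
          (p : (ℕ → ℕ) × (ℕ → ℕ)).2} → Bool) =>
        blockSwap (pe.1 : (ℕ → ℕ) × (ℕ → ℕ)).1 (pe.1 : (ℕ → ℕ) × (ℕ → ℕ)).2 pe.2)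
      = PartitionPairs n ∧
    Nat.card ↥(PartitionPairs n) = numPartitionPairs n := by
  have hcard : Nat.card ↥(PartitionPairs n) = numPartitionPairs n := by
    rw [BSCount.card_partitionPairs n]; rfl
  refine ⟨?_, ?_, hcard⟩
  · rintro ⟨⟨⟨μ₁, ν₁⟩, hΔ₁⟩, ε₁⟩ ⟨⟨⟨μ₂, ν₂⟩, hΔ₂⟩, ε₂⟩ h
    simp only at h
    have hν₁ : Antitone ν₁ := hΔ₁.1.2.1.1
    have hν₂ : Antitone ν₂ := hΔ₂.1.2.1.1
    have hc₁ : ∀ i, ν₁ i ≤ μ₁ i + 1 := hΔ₁.2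
    have hc₂ : ∀ i, ν₂ i ≤ μ₂ i + 1 := hΔ₂.2
    have hμeq : μ₁ = μ₂ := funext fun j => by
      rw [← (BSAux.fwd_inv hν₁ hc₁ ε₁ j).1, ← (BSAux.fwd_inv hν₂ hc₂ ε₂ j).1, h]
    have hνeq : ν₁ = ν₂ := funext fun j => by
      rw [← (BSAux.fwd_inv hν₁ hc₁ ε₁ j).2, ← (BSAux.fwd_inv hν₂ hc₂ ε₂ j).2, h]
    subst hμeq
    subst hνeq
    have hε : ε₁ = ε₂ := funext fun r => by
      rcases r with ⟨r, hr⟩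
      rw [BSAux.fwd_eps hν₁ hc₁ ε₁ hr, BSAux.fwd_eps hν₁ hc₁ ε₂ hr, h]
    subst hε
    rfl
  · ext ⟨f, g⟩
    constructor
    · rintro ⟨⟨⟨⟨μ, ν⟩, hΔ⟩, ε⟩, hpe⟩
      simp only at hpe
      rw [← hpe]
      obtain ⟨⟨⟨hμa, Nμ, hNμ⟩, ⟨hνa, Nν, hNν⟩, hsum⟩, hcond⟩ := hΔ
      exact BSAux.fwd_mem hμa hνa hcond ε hsum (N := max Nμ Nν)
        (fun i hi => ⟨hNμ i (by omega), hNν i (by omega)⟩)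
    · rintro ⟨hf, hg, hsum⟩
      obtain ⟨hfa, Nf, hNf⟩ := hf
      obtain ⟨hga, Ng, hNg⟩ := hg
      refine ⟨⟨⟨(BSAux.invμ f g, BSAux.invν f g),
        BSAux.inv_mem hfa hga hNf hNg hsum⟩,
        fun r => decide (f r.1 + 2 ≤ g r.1)⟩, ?_⟩
      exact BSAux.blockSwap_inv hfa hga ⟨Ng, hNg⟩
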